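/- For an invertible square matrix A, the steady state of the transformed momentum iteration satisfies (I − H)^{-1} F = [(1−β)(A^TA)^{-1}A^Tb ; √(αβ) A (A^TA)^{-1}A^Tb], and when A is invertible the second block equals √(αβ)·b. -/
import Mathlib


open Matrix

theorem mag_steady_state (n : ℕ) (A : Matrix (Fin n) (Fin n) ℝ)
    (b : Fin n → ℝ) (α β : ℝ) (hα : 0 < α) (hβ0 : 0 < β) (hβ1 : β < 1)
    (hA : IsUnit A)
    (H : Matrix (Fin n ⊕ Fin n) (Fin n ⊕ Fin n) ℝ)
    (hH : H = fromBlocks (1 - α • (Aᵀ * A)) ((-Real.sqrt (α * β)) • Aᵀ)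
        (Real.sqrt (α * β) • A) (β • 1))
    (F : Fin n ⊕ Fin n → ℝ)
    (hF : F = Sum.elim (α • (Aᵀ *ᵥ b)) 0)
    (hinv : IsUnit (1 - H)) :
    (1 - H)⁻¹ *ᵥ F =
      Sum.elim ((1 - β) • ((Aᵀ * A)⁻¹ *ᵥ (Aᵀ *ᵥ b)))
        (Real.sqrt (α * β) • (A *ᵥ ((Aᵀ * A)⁻¹ *ᵥ (Aᵀ *ᵥ b)))) ∧
    Real.sqrt (α * β) • (A *ᵥ ((Aᵀ * A)⁻¹ *ᵥ (Aᵀ *ᵥ b))) =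
      Real.sqrt (α * β) • b := by
  set s := Real.sqrt (α * β) with hs
  have hdetA : IsUnit A.det := (Matrix.isUnit_iff_isUnit_det A).mp hA
  have hdetAT : IsUnit Aᵀ.det := by rwa [Matrix.det_transpose]
  set u : Fin n → ℝ := (Aᵀ * A)⁻¹ *ᵥ (Aᵀ *ᵥ b) with hu
  have hAu : A *ᵥ u = b := by
    rw [hu, Matrix.mul_inv_rev, Matrix.mulVec_mulVec, Matrix.mulVec_mulVec]
    have : A * (A⁻¹ * Aᵀ⁻¹) * Aᵀ = 1 := by
      rw [← mul_assoc, Matrix.mul_nonsing_inv _ hdetA, one_mul,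
        Matrix.nonsing_inv_mul _ hdetAT]
    rw [this, Matrix.one_mulVec]
  have hATAu : (Aᵀ * A) *ᵥ u = Aᵀ *ᵥ b := by
    rw [hu, Matrix.mulVec_mulVec, Matrix.mul_nonsing_inv _
      (by rw [Matrix.det_mul]; exact hdetAT.mul hdetA), Matrix.one_mulVec]
  have hs2 : s * s = α * β := Real.mul_self_sqrt (by positivity)
  have h1H : 1 - H = fromBlocks (α • (Aᵀ * A)) (s • Aᵀ) ((-s) • A) ((1 - β) • 1) := by
    rw [hH]
    ext i j
    rcases i with i | i <;> rcases j with j | j <;>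
      simp [Matrix.fromBlocks, Matrix.one_apply, sub_smul, Matrix.sub_apply,
        Matrix.smul_apply, smul_eq_mul] <;> split <;> ring
  have key : (1 - H) *ᵥ Sum.elim ((1 - β) • u) (s • (A *ᵥ u)) = F := by
    rw [h1H, Matrix.fromBlocks_mulVec, hF, hAu]
    simp only [Sum.elim_comp_inl, Sum.elim_comp_inr]
    have htop : (α • (Aᵀ * A)) *ᵥ ((1 - β) • u) + (s • Aᵀ) *ᵥ (s • b)
        = α • (Aᵀ *ᵥ b) := by
      rw [Matrix.mulVec_smul, Matrix.mulVec_smul, Matrix.smul_mulVec,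
        Matrix.smul_mulVec, hATAu, smul_smul, smul_smul, ← add_smul]
      congr 1
      rw [hs2]; ring
    have hbot : ((-s) • A) *ᵥ ((1 - β) • u) + (((1 - β) : ℝ) • 1) *ᵥ (s • b)
        = (0 : Fin n → ℝ) := by
      rw [Matrix.mulVec_smul, Matrix.mulVec_smul, Matrix.smul_mulVec,
        Matrix.smul_mulVec, hAu, Matrix.one_mulVec, smul_smul, smul_smul,
        ← add_smul]
      have : (1 - β) * -s + s * (1 - β) = 0 := by ring
      rw [this, zero_smul]
    rw [htop, hbot]
  have hdet1H : IsUnit (1 - H).det := (Matrix.isUnit_iff_isUnit_det _).mp hinv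
  constructor
  · rw [← key, Matrix.mulVec_mulVec, Matrix.nonsing_inv_mul _ hdet1H, Matrix.one_mulVec]
  · rw [hAu]
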